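/- Let Y = ((E;O);(B₁;B₂)) be a real 2×2×2×2 tensor whose first 2×2×2 slice consists of the identity matrix E and the zero matrix O, and second slice of arbitrary 2×2 real matrices B₁, B₂. Then rank_ℝ(Y) ≤ 4. -/

import Mathlib

open Matrix BigOperators

/-- Cayley hyperdeterminant (up to sign) of a 2×2×2 tensor given by matrix slices A, B. -/
noncomputable def Delta {F : Type*} [Field F] (A B : Matrix (Fin 2) (Fin 2) F) : F :=
  ((A + B).det - (A - B).det) ^ 2 / 4 - 4 * A.det * B.det

/-- Rank of a 2×2×2 tensor, given as a pair of 2×2 matrix slices. -/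
noncomputable def trank3 {F : Type*} [Field F] (T : Fin 2 → Matrix (Fin 2) (Fin 2) F) : ℕ :=
  sInf {r | ∃ u v w : Fin r → Fin 2 → F, ∀ k i j, T k i j = ∑ s, u s k * v s i * w s j}

/-- Rank of a 2×2×2×2 tensor, given as a 2×2 array of 2×2 matrix slices. -/
noncomputable def trank4 {F : Type*} [Field F] (T : Fin 2 → Fin 2 → Matrix (Fin 2) (Fin 2) F) : ℕ :=
  sInf {r | ∃ u v w z : Fin r → Fin 2 → F,
    ∀ k l i j, T k l i j = ∑ s, u s k * v s l * w s i * z s j}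

/-- The 2×2 matrix with columns u and v. -/
def col2 {F : Type*} [Field F] (u v : Fin 2 → F) : Matrix (Fin 2) (Fin 2) F :=
  Matrix.of fun i j => ![u, v] j i

/-- A singular 2×2 real matrix is an outer product. -/
lemma rank1_aux (A : Matrix (Fin 2) (Fin 2) ℝ) (h : A.det = 0) :
    ∃ w z : Fin 2 → ℝ, ∀ i j, A i j = w i * z j := by
  rw [Matrix.det_fin_two] at h
  by_cases h00 : A 0 0 = 0
  · by_cases h01 : A 0 1 = 0
    · refine ⟨![0, 1], ![A 1 0, A 1 1], ?_⟩
      intro i j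
      fin_cases i <;> fin_cases j <;> simp [h00, h01]
    · have h10 : A 1 0 = 0 := by
        have : A 0 1 * A 1 0 = 0 := by rw [h00] at h; linarith
        rcases mul_eq_zero.mp this with h' | h'
        · exact absurd h' h01
        · exact h'
      refine ⟨![A 0 1, A 1 1], ![0, 1], ?_⟩
      intro i j
      fin_cases i <;> fin_cases j <;> simp [h00, h10]
  · refine ⟨![A 0 0, A 1 0], ![1, A 0 1 / A 0 0], ?_⟩
    intro i j
    fin_cases i <;> fin_cases j <;> simp
    · field_simp
    · field_simp
      linarith

/-- A 2×2 matrix with positive discriminant splits as x•1 + y•P with P and 1-P singular. -/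
lemma split_aux (p q r s : ℝ) (h : (p - s)^2 + 4*q*r > 0) :
    ∃ (x y : ℝ) (P : Matrix (Fin 2) (Fin 2) ℝ), P.det = 0 ∧
      ((1 : Matrix (Fin 2) (Fin 2) ℝ) - P).det = 0 ∧
      ∀ i j, (!![p, q; r, s] : Matrix (Fin 2) (Fin 2) ℝ) i j
        = x * (1 : Matrix (Fin 2) (Fin 2) ℝ) i j + y * P i j := by
  set t := Real.sqrt ((p - s)^2 + 4*q*r) with ht
  have ht2 : t^2 = (p - s)^2 + 4*q*r := Real.sq_sqrt h.le
  have htpos : 0 < t := Real.sqrt_pos.mpr h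
  have htne : t ≠ 0 := ne_of_gt htpos
  set lam := (p + s - t)/2 with hlam
  refine ⟨lam, t, !![(p - lam)/t, q/t; r/t, (s - lam)/t], ?_, ?_, ?_⟩
  · rw [Matrix.det_fin_two_of]
    field_simp
    nlinarith [ht2]
  · have : (1 : Matrix (Fin 2) (Fin 2) ℝ) - !![(p - lam)/t, q/t; r/t, (s - lam)/t]
        = !![1 - (p - lam)/t, -(q/t); -(r/t), 1 - (s - lam)/t] := by
      ext i j
      fin_cases i <;> fin_cases j <;> simp [Matrix.one_apply]
    rw [this, Matrix.det_fin_two_of]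
    field_simp
    nlinarith [ht2]
  · intro i j
    fin_cases i <;> fin_cases j <;> simp [Matrix.one_apply] <;> field_simp <;> ring

/-- Master assembly lemma: four explicit rank-one pieces give rank at most 4. -/
lemma master_aux (B₁ B₂ P N₂ N₃ : Matrix (Fin 2) (Fin 2) ℝ) (x y α α' β β' : ℝ)
    (hP : P.det = 0) (hP' : ((1 : Matrix (Fin 2) (Fin 2) ℝ) - P).det = 0)
    (h2 : N₂.det = 0) (h3 : N₃.det = 0)
    (hB₂ : ∀ i j, B₂ i j = α' * N₂ i j + β' * N₃ i j)
    (hB₁ : ∀ i j, B₁ i j = x * (1 : Matrix (Fin 2) (Fin 2) ℝ) i j + y * P i j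
      + α * N₂ i j + β * N₃ i j) :
    trank4 ![![(1 : Matrix (Fin 2) (Fin 2) ℝ), 0], ![B₁, B₂]] ≤ 4 := by
  obtain ⟨w0, z0, hw0⟩ := rank1_aux P hP
  obtain ⟨w1, z1, hw1⟩ := rank1_aux _ hP'
  obtain ⟨w2, z2, hw2⟩ := rank1_aux N₂ h2
  obtain ⟨w3, z3, hw3⟩ := rank1_aux N₃ h3
  apply Nat.sInf_le
  refine ⟨![![1, x+y], ![1, x], ![0,1], ![0,1]],
         ![![1,0], ![1,0], ![α, α'], ![β, β']],
         ![w0, w1, w2, w3], ![z0, z1, z2, z3], ?_⟩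
  intro k l i j
  have e1 : ((1 : Matrix (Fin 2) (Fin 2) ℝ) - P) i j
      = (1 : Matrix (Fin 2) (Fin 2) ℝ) i j - P i j := Matrix.sub_apply _ _ _ _
  fin_cases k <;> fin_cases l <;>
    simp [Fin.sum_univ_four, Matrix.vecHead, Matrix.vecTail, Function.comp] <;>
    first
    | linear_combination hw0 i j + hw1 i j - e1
    | linear_combination (hB₁ i j) + (x+y) * (hw0 i j) + x * (hw1 i j) + α * (hw2 i j)
        + β * (hw3 i j) - x * e1
    | linear_combination (hB₂ i j) + α' * (hw2 i j) + β' * (hw3 i j)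
    | ring

theorem stmt13 (B₁ B₂ : Matrix (Fin 2) (Fin 2) ℝ) :
    trank4 ![![(1 : Matrix (Fin 2) (Fin 2) ℝ), 0], ![B₁, B₂]] ≤ 4 := by
  by_cases hdet : B₂.det = 0
  · -- B₂ singular: fully explicit decomposition
    apply master_aux B₁ B₂ !![1, B₁ 0 1; 0, 0] !![0, 0; B₁ 1 0, B₁ 1 1 - B₁ 0 0 + 1] B₂
      (B₁ 0 0 - 1) 1 1 0 0 1
    · simp [Matrix.det_fin_two_of]
    · have : (1 : Matrix (Fin 2) (Fin 2) ℝ) - !![1, B₁ 0 1; 0, 0]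
          = !![0, -(B₁ 0 1); 0, 1] := by
        ext i j
        fin_cases i <;> fin_cases j <;> simp [Matrix.one_apply]
      rw [this, Matrix.det_fin_two_of]
      ring
    · simp [Matrix.det_fin_two_of]
    · exact hdet
    · intro i j; ring
    · intro i j
      fin_cases i <;> fin_cases j <;> simp [Matrix.one_apply] <;> ring
  · -- B₂ nonsingular: choose α, β making the corrected matrix have positive discriminant
    have hfact : ∃ α β : ℝ,
        0 < (B₁ 0 0 - α * B₂ 0 0 - (B₁ 1 1 - β * B₂ 1 1))^2
          + 4*(B₁ 0 1 - α * B₂ 0 1)*(B₁ 1 0 - β * B₂ 1 0) := by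
      rw [Matrix.det_fin_two] at hdet
      set a := B₁ 0 0; set b := B₁ 0 1; set c := B₁ 1 0; set d := B₁ 1 1
      set e := B₂ 0 0; set f := B₂ 0 1; set g := B₂ 1 0; set h := B₂ 1 1
      by_cases he : e ≠ 0
      · -- quadratic dominance in α
        have he2 : (0:ℝ) < e^2 := by positivity
        refine ⟨(|2*e*(a-d) + 4*f*c| + |(a-d)^2 + 4*b*c| + 1 + e^2)/e^2, 0, ?_⟩
        set K := 2*e*(a-d) + 4*f*c with hK
        set L := (a-d)^2 + 4*b*c with hL
        set α := (|K| + |L| + 1 + e^2)/e^2 with hα0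
        have hα : e^2 * α = |K| + |L| + 1 + e^2 := by
          rw [hα0]; field_simp
        have hα1 : 1 ≤ α := by
          rw [hα0, le_div_iff₀ he2]
          nlinarith [abs_nonneg K, abs_nonneg L]
        have key : (a - α * e - (d - 0 * h))^2 + 4*(b - α * f)*(c - 0 * g)
            = α*(|K| - K) + (α - 1)*(|L| + 1 + e^2) + (L + |L|) + 1 + e^2 := by
          linear_combination α * hα + α * hK - hL
        rw [key]
        have t1 : 0 ≤ α*(|K| - K) :=
          mul_nonneg (by linarith) (by linarith [le_abs_self K])
        have t2 : 0 ≤ (α - 1)*(|L| + 1 + e^2) :=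
          mul_nonneg (by linarith) (by positivity)
        have t3 : 0 ≤ L + |L| := by linarith [neg_abs_le L]
        nlinarith [he2]
      · push_neg at he
        by_cases hh : h ≠ 0
        · -- quadratic dominance in β
          have hh2 : (0:ℝ) < h^2 := by positivity
          refine ⟨0, (|4*b*g - 2*h*(a-d)| + |(a-d)^2 + 4*b*c| + 1 + h^2)/h^2, ?_⟩
          set K := 4*b*g - 2*h*(a-d) with hK
          set L := (a-d)^2 + 4*b*c with hL
          set β := (|K| + |L| + 1 + h^2)/h^2 with hβ0
          have hβ : h^2 * β = |K| + |L| + 1 + h^2 := by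
            rw [hβ0]; field_simp
          have hβ1 : 1 ≤ β := by
            rw [hβ0, le_div_iff₀ hh2]
            nlinarith [abs_nonneg K, abs_nonneg L]
          have key : (a - 0 * e - (d - β * h))^2 + 4*(b - 0 * f)*(c - β * g)
              = β*(|K| - K) + (β - 1)*(|L| + 1 + h^2) + (L + |L|) + 1 + h^2 := by
            linear_combination β * hβ + β * hK - hL
          rw [key]
          have t1 : 0 ≤ β*(|K| - K) :=
            mul_nonneg (by linarith) (by linarith [le_abs_self K])
          have t2 : 0 ≤ (β - 1)*(|L| + 1 + h^2) :=
            mul_nonneg (by linarith) (by positivity)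
          have t3 : 0 ≤ L + |L| := by linarith [neg_abs_le L]
          nlinarith [hh2]
        · -- e = h = 0, so f and g are nonzero
          push_neg at hh
          have hfg : f * g ≠ 0 := by
            intro hfg
            apply hdet
            rw [he, hh]
            linarith [hfg]
          have hf : f ≠ 0 := fun h' => hfg (by rw [h']; ring)
          have hg : g ≠ 0 := fun h' => hfg (by rw [h']; ring)
          refine ⟨(b-1)/f, (c-1)/g, ?_⟩
          have h1 : b - (b-1)/f * f = 1 := by field_simp; ring
          have h2 : c - (c-1)/g * g = 1 := by field_simp; ring
          have h3 : (b - (b-1)/f * f) * (c - (c-1)/g * g) = 1 := by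
            rw [h1, h2]; norm_num
          nlinarith [h3, sq_nonneg (a - (b-1)/f * e - (d - (c-1)/g * h))]
    obtain ⟨α, β, hd⟩ := hfact
    obtain ⟨x, y, P, hP, hP', hM⟩ := split_aux (B₁ 0 0 - α * B₂ 0 0) (B₁ 0 1 - α * B₂ 0 1)
      (B₁ 1 0 - β * B₂ 1 0) (B₁ 1 1 - β * B₂ 1 1) hd
    apply master_aux B₁ B₂ P !![B₂ 0 0, B₂ 0 1; 0, 0] !![0, 0; B₂ 1 0, B₂ 1 1] x y α 1 β 1
      hP hP'
    · simp [Matrix.det_fin_two_of]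
    · simp [Matrix.det_fin_two_of]
    · intro i j
      fin_cases i <;> fin_cases j <;> simp
    · intro i j
      have hm := hM i j
      fin_cases i <;> fin_cases j <;> simp [Matrix.one_apply] at hm ⊢ <;> linarith
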